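/- arXiv:1405.0224 — 2 statements merged into one kernel-verified Lean document; each statement's English description precedes it below -/
import Mathlib

section
/- Let F be a closed subset of the complex plane ℂ. Then F is connected if and only if for each connected component U of the complement ℂ \ F, the topological boundary ∂U is connected. -/
open Complex Filter Topology Set Bornology OnePoint

/-- A transcendental entire function: differentiable on all of `ℂ` and not a polynomial. -/
def TranscendentalEntire (f : ℂ → ℂ) : Prop :=
  Differentiable ℂ f ∧ ¬ ∃ p : Polynomial ℂ, f = fun z => p.eval z

/-- The family `G` is normal on the set `U`: every sequence in `G` has a subsequence which
either converges locally uniformly on `U`, or diverges to `∞` uniformly on compact subsets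
of `U`. -/
def NormalOn (G : Set (ℂ → ℂ)) (U : Set ℂ) : Prop :=
  ∀ s : ℕ → (ℂ → ℂ), (∀ n, s n ∈ G) →
    ∃ φ : ℕ → ℕ, StrictMono φ ∧
      ((∃ f : ℂ → ℂ, TendstoLocallyUniformlyOn (fun n => s (φ n)) f atTop U) ∨
        (∀ K ⊆ U, IsCompact K → ∀ M : ℝ, ∀ᶠ n in atTop, ∀ z ∈ K, M ≤ ‖s (φ n) z‖))

/-- The Fatou set of a family of entire functions: the largest open set on which the
family is normal. -/
def FatouSet (G : Set (ℂ → ℂ)) : Set ℂ :=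
  {z | ∃ U : Set ℂ, IsOpen U ∧ z ∈ U ∧ NormalOn G U}

/-- The Fatou set of a single function: the Fatou set of the family of its iterates. -/
def FatouFn (g : ℂ → ℂ) : Set ℂ :=
  FatouSet {h | ∃ n : ℕ, 0 < n ∧ h = g^[n]}

/-- A preconnected subset of the range of `Int.cast` in `ℝ` is a subsingleton. -/
lemma int_image_subsingleton {T : Set ℝ} (hT : IsPreconnected T)
    (h : ∀ x ∈ T, ∃ n : ℤ, x = n) : T.Subsingleton := by
  have key : ∀ m n : ℤ, (m:ℝ) ∈ T → (n:ℝ) ∈ T → m < n → False := by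
    intro m n hm hn hlt
    have hmem : (m : ℝ) + 1/2 ∈ T := by
      apply hT.ordConnected.out hm hn
      refine ⟨by linarith, ?_⟩
      have : (m : ℝ) + 1 ≤ n := by exact_mod_cast hlt
      linarith
    obtain ⟨k, hk⟩ := h _ hmem
    have h2 : (2*k : ℝ) = 2*m + 1 := by push_cast at hk ⊢; linarith
    have : (2*k : ℤ) = 2*m + 1 := by exact_mod_cast h2
    omega
  intro a ha b hb
  obtain ⟨m, rfl⟩ := h a ha
  obtain ⟨n, rfl⟩ := h b hb
  rcases lt_trichotomy m n with hc | hc | hc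
  · exact absurd (key m n ha hb hc) (by simp)
  · rw [hc]
  · exact absurd (key n m hb ha hc) (by simp)

/-- Uniqueness of continuous logarithms on a preconnected set. -/
lemma lift_unique {s : Set ℂ} (hs : IsPreconnected s) {g₁ g₂ : ℂ → ℂ}
    (h₁ : ContinuousOn g₁ s) (h₂ : ContinuousOn g₂ s)
    (hexp : ∀ z ∈ s, Complex.exp (g₁ z) = Complex.exp (g₂ z))
    {x₀ : ℂ} (hx₀ : x₀ ∈ s) (h0 : g₁ x₀ = g₂ x₀) : Set.EqOn g₁ g₂ s := by
  set r : ℂ → ℝ := fun z => ((g₁ z - g₂ z) / (2 * Real.pi * I)).re with hr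
  have hint : ∀ z ∈ s, ∃ n : ℤ, g₁ z - g₂ z = n * (2 * Real.pi * I) := by
    intro z hz
    have : Complex.exp (g₁ z - g₂ z) = 1 := by
      rw [Complex.exp_sub, hexp z hz, div_self (Complex.exp_ne_zero _)]
    rwa [Complex.exp_eq_one_iff] at this
  have hne : (2 * (Real.pi:ℂ) * I) ≠ 0 := by
    simp [Real.pi_ne_zero, Complex.I_ne_zero]
  have hval : ∀ z ∈ s, g₁ z - g₂ z = (r z : ℂ) * (2 * Real.pi * I) := by
    intro z hz
    obtain ⟨n, hn⟩ := hint z hz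
    have : (g₁ z - g₂ z) / (2 * Real.pi * I) = (n : ℂ) := by
      rw [hn]; field_simp
    simp only [hr, this, Complex.intCast_re]
    exact_mod_cast hn
  have hrc : ContinuousOn r s := by
    apply Complex.continuous_re.comp_continuousOn
    exact ((h₁.sub h₂).div_const _)
  have himg : (r '' s).Subsingleton := by
    apply int_image_subsingleton (hs.image r hrc)
    rintro x ⟨z, hz, rfl⟩
    obtain ⟨n, hn⟩ := hint z hz
    refine ⟨n, ?_⟩
    have : (g₁ z - g₂ z) / (2 * Real.pi * I) = (n : ℂ) := by rw [hn]; field_simp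
    simp [hr, this]
  have hr0 : r x₀ = 0 := by simp [hr, h0]
  intro z hz
  have : r z = r x₀ := himg (mem_image_of_mem r hz) (mem_image_of_mem r hx₀)
  have := hval z hz
  rw [‹r z = r x₀›, hr0] at this
  simpa [sub_eq_zero] using this

/-- Existence of a continuous logarithm on a closed ball. -/
lemma ball_lift {f : ℂ → ℂ} (hf : Continuous f) (hnz : ∀ z, f z ≠ 0) (R : ℝ) (hR : 0 ≤ R) :
    ∃ g : ℂ → ℂ, ContinuousOn g (Metric.closedBall 0 R) ∧
      (∀ z ∈ Metric.closedBall 0 R, Complex.exp (g z) = f z) ∧ g 0 = Complex.log (f 0) := by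
  set K := Metric.closedBall (0:ℂ) R with hK
  have hKc : IsCompact K := isCompact_closedBall 0 R
  have h0K : (0:ℂ) ∈ K := by simp [hK, hR]
  -- positive lower bound for ‖f‖ on K
  obtain ⟨zm, hzm, hzmin⟩ := hKc.exists_isMinOn ⟨0, h0K⟩ (hf.norm.continuousOn)
  set m := ‖f zm‖ with hm
  have hmpos : 0 < m := norm_pos_iff.mpr (hnz zm)
  have hmle : ∀ z ∈ K, m ≤ ‖f z‖ := fun z hz => hzmin hz
  -- uniform continuity
  have huc : UniformContinuousOn f K := hKc.uniformContinuousOn_of_continuous hf.continuousOn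
  rw [Metric.uniformContinuousOn_iff] at huc
  obtain ⟨δ, hδpos, hδ⟩ := huc m hmpos
  obtain ⟨n, hn⟩ := exists_nat_gt (R / δ)
  have hnpos : 0 < n := by
    by_contra h
    push_neg at h
    interval_cases n
    have : 0 ≤ R / δ := div_nonneg hR hδpos.le
    simp at hn; linarith
  have hnc : ((n:ℂ)) ≠ 0 := Nat.cast_ne_zero.mpr hnpos.ne'
  have hRn : R / n < δ := by
    have h1 : R < ↑n * δ := by
      have := (div_lt_iff₀ hδpos).mp hn
      linarith
    rw [div_lt_iff₀ (show (0:ℝ) < n by exact_mod_cast hnpos)]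
    linarith
  set c : ℕ → ℂ → ℂ := fun k z => ((k:ℂ)/n) * z with hc
  have hcK : ∀ z ∈ K, ∀ k, k ≤ n → c k z ∈ K := by
    intro z hz k hk
    simp only [hK, Metric.mem_closedBall, dist_zero_right] at hz ⊢
    rw [norm_mul]
    calc ‖(k:ℂ)/n‖ * ‖z‖ ≤ 1 * ‖z‖ := by
          apply mul_le_mul_of_nonneg_right _ (norm_nonneg z)
          rw [norm_div]
          simp only [Complex.norm_natCast]
          rw [div_le_one (by exact_mod_cast hnpos)]
          exact_mod_cast hk
    _ ≤ R := by simpa using hz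
  have hclose : ∀ z ∈ K, ∀ k, k < n → ‖f (c (k+1) z) - f (c k z)‖ < m := by
    intro z hz k hk
    rw [← dist_eq_norm]
    apply hδ _ (hcK z hz (k+1) hk) _ (hcK z hz _ hk.le)
    rw [dist_eq_norm]
    have : c (k+1) z - c k z = (1/(n:ℂ)) * z := by
      simp only [hc]; push_cast; ring
    rw [this, norm_mul]
    have hzR : ‖z‖ ≤ R := by simpa [hK] using hz
    calc ‖(1:ℂ)/n‖ * ‖z‖ ≤ (1/n) * R := by
          apply mul_le_mul _ hzR (norm_nonneg z) (by positivity)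
          rw [norm_div]; simp
    _ = R / n := by ring
    _ < δ := hRn
  have hratio : ∀ z ∈ K, ∀ k, k < n →
      0 < (f (c (k+1) z) / f (c k z)).re := by
    intro z hz k hk
    have hden := hnz (c k z)
    have h1 : ‖f (c (k+1) z) / f (c k z) - 1‖ < 1 := by
      rw [div_sub_one hden, norm_div]
      rw [div_lt_one (norm_pos_iff.mpr hden)]
      exact lt_of_lt_of_le (hclose z hz k hk) (hmle _ (hcK z hz _ hk.le))
    set w := f (c (k+1) z) / f (c k z)
    have : |(w - 1).re| ≤ ‖w - 1‖ := Complex.abs_re_le_norm _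
    have h2 : |w.re - 1| < 1 := by
      simpa [Complex.sub_re] using lt_of_le_of_lt this h1
    have := abs_lt.mp h2
    linarith [this.1]
  refine ⟨fun z => Complex.log (f 0) + ∑ k ∈ Finset.range n,
      Complex.log (f (c (k+1) z) / f (c k z)), ?_, ?_, ?_⟩
  · apply continuousOn_const.add
    apply continuousOn_finset_sum
    intro k hk
    rw [Finset.mem_range] at hk
    apply ContinuousOn.clog
    · exact ((hf.comp (continuous_const.mul continuous_id)).continuousOn).div
        ((hf.comp (continuous_const.mul continuous_id)).continuousOn)
        (fun z hz => hnz _)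
    · intro z hz
      rw [Complex.mem_slitPlane_iff]
      exact Or.inl (hratio z hz k hk)
  · intro z hz
    have key : ∀ j, j ≤ n → Complex.exp (Complex.log (f 0) + ∑ k ∈ Finset.range j,
        Complex.log (f (c (k+1) z) / f (c k z))) = f (c j z) := by
      intro j hj
      induction j with
      | zero =>
        simp [hc, Complex.exp_log (hnz 0)]
      | succ i ih =>
        rw [Finset.sum_range_succ, ← add_assoc, Complex.exp_add, ih (by omega),
          Complex.exp_log (div_ne_zero (hnz _) (hnz _))]
        rw [mul_comm, div_mul_eq_mul_div, mul_div_assoc, div_self (hnz _), mul_one]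
    have := key n le_rfl
    rwa [show c n z = z by simp [hc, div_self hnc]] at this
  · have : ∀ k, c k 0 = 0 := fun k => by simp [hc]
    simp [this, Complex.log_one, div_self (hnz 0)]

/-- Every continuous nonvanishing function on `ℂ` has a continuous logarithm. -/
lemma global_lift {f : ℂ → ℂ} (hf : Continuous f) (hnz : ∀ z, f z ≠ 0) :
    ∃ g : ℂ → ℂ, Continuous g ∧ ∀ z, Complex.exp (g z) = f z := by
  choose G hGc hGe hG0 using fun n : ℕ => ball_lift hf hnz n (Nat.cast_nonneg n)
  have hagree : ∀ a b : ℕ, a ≤ b → Set.EqOn (G a) (G b) (Metric.closedBall 0 a) := by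
    intro a b hab
    have hsub : Metric.closedBall (0:ℂ) a ⊆ Metric.closedBall 0 b :=
      Metric.closedBall_subset_closedBall (by exact_mod_cast hab)
    apply lift_unique (x₀ := 0) (convex_closedBall (0:ℂ) a).isPreconnected (hGc a) ((hGc b).mono hsub)
    · intro z hz
      rw [hGe a z hz, hGe b z (hsub hz)]
    · simp [Nat.cast_nonneg]
    · rw [hG0 a, hG0 b]
  refine ⟨fun z => G ⌈‖z‖⌉₊ z, ?_, ?_⟩
  · rw [continuous_iff_continuousAt]
    intro z₀
    set N := ⌈‖z₀‖⌉₊ + 1 with hN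
    have hz₀ : z₀ ∈ Metric.ball (0:ℂ) N := by
      simp only [Metric.mem_ball, dist_zero_right]
      calc ‖z₀‖ ≤ ⌈‖z₀‖⌉₊ := Nat.le_ceil _
      _ < N := by exact_mod_cast Nat.lt_succ_self _
    have hmem : Metric.ball (0:ℂ) N ∈ nhds z₀ := Metric.isOpen_ball.mem_nhds hz₀
    have heq : ∀ z ∈ Metric.ball (0:ℂ) N, G ⌈‖z‖⌉₊ z = G N z := by
      intro z hz
      have h1 : ⌈‖z‖⌉₊ ≤ N := by
        apply Nat.ceil_le.mpr
        simp only [Metric.mem_ball, dist_zero_right] at hz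
        exact_mod_cast hz.le
      exact hagree _ _ h1 (by simp [Nat.le_ceil])
    have hct : ContinuousAt (G N) z₀ :=
      (hGc N).continuousAt (Filter.mem_of_superset hmem Metric.ball_subset_closedBall)
    apply hct.congr
    exact Filter.eventuallyEq_of_mem hmem (fun z hz => (heq z hz).symm)
  · intro z
    exact hGe _ z (by simp [Nat.le_ceil])

/-- Unicoherence of the plane: if two closed preconnected sets cover `ℂ`, their
intersection is preconnected. -/
lemma unicoherence {A B : Set ℂ} (hAc : IsClosed A) (hBc : IsClosed B)
    (hA : IsPreconnected A) (hB : IsPreconnected B) (hAB : A ∪ B = Set.univ) :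
    IsPreconnected (A ∩ B) := by
  classical
  by_contra hcon
  rw [isPreconnected_iff_subset_of_fully_disjoint_closed (hAc.inter hBc)] at hcon
  push_neg at hcon
  obtain ⟨t, t', ht, ht', hsub, hdisj, hnt, hnt'⟩ := hcon
  set P := (A ∩ B) ∩ t with hP
  set Q := (A ∩ B) ∩ t' with hQ
  have hPc : IsClosed P := (hAc.inter hBc).inter ht
  have hQc : IsClosed Q := (hAc.inter hBc).inter ht'
  have hPQdisj : Disjoint P Q := by
    apply Set.disjoint_of_subset Set.inter_subset_right Set.inter_subset_right hdisj
  have hPQ : P ∪ Q = A ∩ B := by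
    rw [hP, hQ, ← Set.inter_union_distrib_left]
    exact Set.inter_eq_self_of_subset_left hsub
  obtain ⟨q, hq⟩ : Q.Nonempty := by
    obtain ⟨x, hx, hxt⟩ := Set.not_subset.mp hnt
    exact ⟨x, hx, (hsub hx).resolve_left hxt⟩
  obtain ⟨p, hp⟩ : P.Nonempty := by
    obtain ⟨x, hx, hxt'⟩ := Set.not_subset.mp hnt'
    exact ⟨x, hx, (hsub hx).resolve_right hxt'⟩
  obtain ⟨u, hu0, hu1, _⟩ := exists_continuous_zero_one_of_isClosed hPc hQc hPQdisj
  -- the glued circle-valued map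
  set f : ℂ → ℂ := fun z =>
    if z ∈ A then Complex.exp (Real.pi * I * (u z)) else Complex.exp (-(Real.pi * I) * (u z))
    with hf
  have hABval : ∀ z ∈ A ∩ B,
      Complex.exp (Real.pi * I * (u z)) = Complex.exp (-(Real.pi * I) * (u z)) := by
    intro z hz
    rw [← hPQ] at hz
    rcases hz with hz | hz
    · have : u z = 0 := hu0 hz
      simp [this]
    · have : u z = 1 := hu1 hz
      rw [this]
      push_cast
      rw [mul_one, mul_one, Complex.exp_pi_mul_I, Complex.exp_neg, Complex.exp_pi_mul_I]
      norm_num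
  have hfrontA : frontier A ⊆ A ∩ B := by
    rw [frontier_eq_closure_inter_closure, hAc.closure_eq]
    apply Set.inter_subset_inter_right
    rw [← hBc.closure_eq]
    apply closure_mono
    intro x hx
    rcases (hAB ▸ Set.mem_univ x : x ∈ A ∪ B) with h | h
    · exact absurd h hx
    · exact h
  have hcu : Continuous fun z => ((u z : ℝ) : ℂ) := Complex.continuous_ofReal.comp u.continuous
  have hfc : Continuous f := by
    apply Continuous.if
    · exact fun a ha => hABval a (hfrontA ha)
    · exact Complex.continuous_exp.comp (continuous_const.mul hcu)
    · exact Complex.continuous_exp.comp (continuous_const.mul hcu)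
  have hfnz : ∀ z, f z ≠ 0 := by
    intro z
    rw [hf]
    beta_reduce
    split_ifs <;> exact Complex.exp_ne_zero _
  obtain ⟨g, hgc, hge⟩ := global_lift hfc hfnz
  have hpA : p ∈ A := ((hPQ ▸ Set.mem_union_left Q hp) : p ∈ A ∩ B).1
  have hqA : q ∈ A := ((hPQ ▸ Set.mem_union_right P hq) : q ∈ A ∩ B).1
  have hpB : p ∈ B := ((hPQ ▸ Set.mem_union_left Q hp) : p ∈ A ∩ B).2
  have hqB : q ∈ B := ((hPQ ▸ Set.mem_union_right P hq) : q ∈ A ∩ B).2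
  have hup : u p = 0 := hu0 hp
  have huq : u q = 1 := hu1 hq
  -- constancy on A
  set kA : ℂ → ℂ := fun z => g z - Real.pi * I * (u z) with hkA
  have hkAA : ∀ z ∈ A, Complex.exp (kA z) = 1 := by
    intro z hz
    rw [hkA]
    simp only [Complex.exp_sub, hge z]
    rw [hf]
    beta_reduce
    rw [if_pos hz, div_self (Complex.exp_ne_zero _)]
  have hkAconst : kA q = kA p := by
    have := lift_unique (g₁ := kA) (g₂ := fun _ => kA p) hA
      ((hgc.sub (continuous_const.mul hcu)).continuousOn) continuousOn_const
      (fun z hz => by rw [hkAA z hz, hkAA p hpA]) hpA rfl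
    exact this hqA
  -- constancy on B
  set kB : ℂ → ℂ := fun z => g z + Real.pi * I * (u z) with hkB
  have hfB : ∀ z ∈ B, f z = Complex.exp (-(Real.pi * I) * (u z)) := by
    intro z hz
    by_cases hzA : z ∈ A
    · rw [hf]; beta_reduce; rw [if_pos hzA]; exact hABval z ⟨hzA, hz⟩
    · rw [hf]; beta_reduce; rw [if_neg hzA]
  have hkBB : ∀ z ∈ B, Complex.exp (kB z) = 1 := by
    intro z hz
    rw [hkB]
    simp only [Complex.exp_add, hge z]
    rw [hfB z hz, ← Complex.exp_add]
    ring_nf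
    exact Complex.exp_zero
  have hkBconst : kB q = kB p := by
    have := lift_unique (g₁ := kB) (g₂ := fun _ => kB p) hB
      ((hgc.add (continuous_const.mul hcu)).continuousOn) continuousOn_const
      (fun z hz => by rw [hkBB z hz, hkBB p hpB]) hpB rfl
    exact this hqB
  simp only [hkA, hkB, hup, huq, Complex.ofReal_zero, Complex.ofReal_one, mul_zero, mul_one,
    sub_zero, add_zero] at hkAconst hkBconst
  have : (Real.pi : ℂ) * I = 0 := by linear_combination (hkBconst - hkAconst) / 2
  simp [Real.pi_ne_zero, Complex.I_ne_zero] at this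

lemma frontier_comp_subset {F : Set ℂ} (hF : IsClosed F) (z : ℂ) :
    frontier (connectedComponentIn Fᶜ z) ⊆ F := by
  set U := connectedComponentIn Fᶜ z with hU
  have hUo : IsOpen U := hF.isOpen_compl.connectedComponentIn
  rw [hUo.frontier_eq]
  rintro x ⟨hxc, hxU⟩
  by_contra hxF
  have hx : x ∈ Fᶜ := hxF
  have hV : IsOpen (connectedComponentIn Fᶜ x) := hF.isOpen_compl.connectedComponentIn
  have hxV : x ∈ connectedComponentIn Fᶜ x := mem_connectedComponentIn hx
  obtain ⟨y, hyV, hyU⟩ := mem_closure_iff.mp hxc _ hV hxV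
  have h1 : connectedComponentIn Fᶜ x = connectedComponentIn Fᶜ y := connectedComponentIn_eq hyV
  have h2 : U = connectedComponentIn Fᶜ y := connectedComponentIn_eq hyU
  exact hxU (h2 ▸ h1 ▸ hxV)

lemma frontier_comp_nonempty {F : Set ℂ} (hF : IsClosed F) (hFne : F.Nonempty)
    {z : ℂ} (hz : z ∈ Fᶜ) : (frontier (connectedComponentIn Fᶜ z)).Nonempty := by
  rw [nonempty_frontier_iff]
  refine ⟨⟨z, mem_connectedComponentIn hz⟩, ?_⟩
  intro h
  obtain ⟨w, hw⟩ := hFne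
  have : w ∈ Fᶜ := (connectedComponentIn_subset Fᶜ z) (h ▸ Set.mem_univ w)
  exact this hw

lemma compl_comp_preconnected {F : Set ℂ} (hF : IsClosed F) (hFc : IsPreconnected F)
    (hFne : F.Nonempty) (z : ℂ) :
    IsPreconnected (connectedComponentIn Fᶜ z)ᶜ := by
  set U := connectedComponentIn Fᶜ z with hU
  obtain ⟨f₀, hf₀⟩ := hFne
  set c : Set (Set ℂ) :=
    insert F {s | ∃ w ∈ Fᶜ \ U, s = closure (connectedComponentIn Fᶜ w) ∪ F} with hc
  have hdisj : ∀ w ∈ Fᶜ \ U, Disjoint (connectedComponentIn Fᶜ w) U := by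
    rintro w ⟨hw1, hw2⟩
    rw [Set.disjoint_iff_inter_eq_empty]
    by_contra hne
    obtain ⟨y, hy1, hy2⟩ := Set.nonempty_iff_ne_empty.mpr hne
    have h1 : connectedComponentIn Fᶜ w = connectedComponentIn Fᶜ y := connectedComponentIn_eq hy1
    have h2 : U = connectedComponentIn Fᶜ y := connectedComponentIn_eq hy2
    exact hw2 (h2 ▸ h1 ▸ mem_connectedComponentIn hw1)
  have hUcomp : Uᶜ = ⋃₀ c := by
    ext x
    constructor
    · intro hx
      by_cases hxF : x ∈ F
      · exact ⟨F, Set.mem_insert _ _, hxF⟩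
      · refine ⟨closure (connectedComponentIn Fᶜ x) ∪ F,
          Set.mem_insert_of_mem _ ⟨x, ⟨hxF, hx⟩, rfl⟩,
          Or.inl (subset_closure (mem_connectedComponentIn hxF))⟩
    · rintro ⟨s, hs, hxs⟩
      rcases hs with h | ⟨w, hw, h⟩
      · rw [h] at hxs
        exact fun hm => (connectedComponentIn_subset Fᶜ z hm) hxs
      · subst h
        rcases hxs with hx | hx
        · -- x ∈ closure V_w ⊆ V_w ∪ frontier V_w, disjoint from U
          have hcl : closure (connectedComponentIn Fᶜ w) ⊆
              connectedComponentIn Fᶜ w ∪ F := by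
            intro y hy
            by_cases hyV : y ∈ connectedComponentIn Fᶜ w
            · exact Or.inl hyV
            · exact Or.inr (frontier_comp_subset hF w
                (by rw [(hF.isOpen_compl.connectedComponentIn).frontier_eq]; exact ⟨hy, hyV⟩))
          rcases hcl hx with h | h
          · exact fun hxU => (hdisj w hw).ne_of_mem h hxU rfl
          · exact fun hxU => (connectedComponentIn_subset Fᶜ z hxU) h
        · exact fun h => (connectedComponentIn_subset Fᶜ z h) hx
  rw [hUcomp]
  apply isPreconnected_sUnion f₀ c
  · rintro s (h | ⟨w, hw, h⟩)
    · rw [h]; exact hf₀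
    · rw [h]; exact Or.inr hf₀
  · rintro s (h | ⟨w, hw, h⟩)
    · rw [h]; exact hFc
    · rw [h]
      -- closure V_w ∪ F preconnected
      obtain ⟨y, hy⟩ := frontier_comp_nonempty hF ⟨f₀, hf₀⟩ hw.1
      apply IsPreconnected.union y
      · exact frontier_subset_closure hy
      · exact frontier_comp_subset hF w hy
      · exact isPreconnected_connectedComponentIn.closure
      · exact hFc

lemma X_isClosed {F A B : Set ℂ} (hF : IsClosed F) (hA : IsClosed A) (hB : IsClosed B)
    (hUn : A ∪ B = F) (hdisj : Disjoint A B)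
    (hfr : ∀ z ∈ Fᶜ, frontier (connectedComponentIn Fᶜ z) ⊆ A ∨
      frontier (connectedComponentIn Fᶜ z) ⊆ B)
    (hfrne : ∀ z ∈ Fᶜ, (frontier (connectedComponentIn Fᶜ z)).Nonempty) :
    IsClosed (A ∪ {z | z ∈ Fᶜ ∧ frontier (connectedComponentIn Fᶜ z) ⊆ A}) := by
  set X := A ∪ {z | z ∈ Fᶜ ∧ frontier (connectedComponentIn Fᶜ z) ⊆ A} with hX
  apply isClosed_of_closure_subset
  intro x hx
  by_contra hxX
  -- x is in the "B side"
  have hxside : x ∈ B ∨ (x ∈ Fᶜ ∧ frontier (connectedComponentIn Fᶜ x) ⊆ B) := by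
    by_cases hxF : x ∈ F
    · rcases (hUn ▸ hxF : x ∈ A ∪ B) with h | h
      · exact absurd (Or.inl h) hxX
      · exact Or.inl h
    · rcases hfr x hxF with h | h
      · exact absurd (Or.inr ⟨hxF, h⟩) hxX
      · exact Or.inr ⟨hxF, h⟩
  rcases hxside with hxB | ⟨hxFc, hxfr⟩
  · -- x ∈ B : ball avoiding A, segment argument
    have hxA : x ∉ A := fun h => hxX (Or.inl h)
    obtain ⟨ε, hεpos, hball⟩ := Metric.isOpen_iff.mp hA.isOpen_compl x hxA
    obtain ⟨y, hyX, hyb⟩ := Metric.mem_closure_iff.mp hx ε hεpos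
    have hyb' : y ∈ Metric.ball x ε := by rw [Metric.mem_ball, dist_comm]; exact hyb
    have hyA : y ∉ A := fun h => (hball hyb') h
    have hyFc : y ∈ Fᶜ := by
      rcases hyX with h | h
      · exact absurd h hyA
      · exact h.1
    have hyfr : frontier (connectedComponentIn Fᶜ y) ⊆ A := by
      rcases hyX with h | h
      · exact absurd h hyA
      · exact h.2
    set γ : ℝ → ℂ := fun t => y + (t : ℂ) * (x - y) with hγ
    have hγc : Continuous γ := by continuity
    have hγ0 : γ 0 = y := by simp [hγ]
    have hγ1 : γ 1 = x := by simp [hγ]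
    have hγball : ∀ t ∈ Set.Icc (0:ℝ) 1, γ t ∈ Metric.ball x ε := by
      intro t ⟨ht0, ht1⟩
      rw [Metric.mem_ball, dist_eq_norm]
      have : γ t - x = ((1 - t : ℝ) : ℂ) * (y - x) := by
        simp only [hγ]; push_cast; ring
      rw [this, norm_mul]
      rw [Metric.mem_ball, dist_eq_norm] at hyb'
      calc ‖((1 - t : ℝ) : ℂ)‖ * ‖y - x‖ ≤ 1 * ‖y - x‖ := by
            apply mul_le_mul_of_nonneg_right _ (norm_nonneg _)
            rw [Complex.norm_real, Real.norm_eq_abs, abs_le]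
            constructor <;> linarith
      _ < ε := by simpa using hyb'
    set S := Set.Icc (0:ℝ) 1 ∩ γ ⁻¹' F with hS
    have hSc : IsClosed S := isClosed_Icc.inter (hF.preimage hγc)
    have hSne : S.Nonempty := ⟨1, ⟨zero_le_one, le_refl 1⟩, by
      simp only [Set.mem_preimage, hγ1]; rw [← hUn]; exact Or.inr hxB⟩
    have hSbdd : BddBelow S := ⟨0, fun t ht => ht.1.1⟩
    set t₀ := sInf S with ht₀
    have ht₀S : t₀ ∈ S := hSc.csInf_mem hSne hSbdd
    have ht₀pos : 0 < t₀ := by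
      rcases lt_or_eq_of_le ht₀S.1.1 with h | h
      · exact h
      · exfalso; apply hyFc; have := ht₀S.2; rw [← h] at this
        simpa [hγ0] using this
    have hIco : γ '' Set.Ico 0 t₀ ⊆ Fᶜ := by
      rintro _ ⟨t, ⟨ht0, htl⟩, rfl⟩
      intro htF
      have : t ∈ S := ⟨⟨ht0, htl.le.trans ht₀S.1.2⟩, htF⟩
      exact absurd (csInf_le hSbdd this) (not_le.mpr htl)
    have hy_img : y ∈ γ '' Set.Ico 0 t₀ := ⟨0, ⟨le_refl 0, ht₀pos⟩, hγ0⟩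
    have himg_sub : γ '' Set.Ico 0 t₀ ⊆ connectedComponentIn Fᶜ y :=
      (isPreconnected_Ico.image γ hγc.continuousOn).subset_connectedComponentIn hy_img hIco
    have hcl : γ t₀ ∈ closure (connectedComponentIn Fᶜ y) := by
      apply closure_mono himg_sub
      apply (image_closure_subset_closure_image hγc)
      refine ⟨t₀, ?_, rfl⟩
      rw [closure_Ico ht₀pos.ne]
      exact ⟨ht₀pos.le, le_refl _⟩
    have hγt₀F : γ t₀ ∈ F := ht₀S.2
    have hfront : γ t₀ ∈ frontier (connectedComponentIn Fᶜ y) := by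
      rw [(hF.isOpen_compl.connectedComponentIn).frontier_eq]
      exact ⟨hcl, fun h => (connectedComponentIn_subset Fᶜ y h) hγt₀F⟩
    have : γ t₀ ∈ A := hyfr hfront
    exact (hball (hγball t₀ ht₀S.1)) this
  · -- x in a component whose frontier is in B
    set V := connectedComponentIn Fᶜ x with hV
    have hVo : IsOpen V := hF.isOpen_compl.connectedComponentIn
    have hxV : x ∈ V := mem_connectedComponentIn hxFc
    obtain ⟨y, hyV, hyX⟩ := mem_closure_iff.mp hx V hVo hxV
    rcases hyX with hyA | ⟨hyFc, hyfr⟩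
    · exact (connectedComponentIn_subset Fᶜ x hyV) (hUn ▸ Or.inl hyA)
    · have : connectedComponentIn Fᶜ y = V := (connectedComponentIn_eq hyV).symm
      rw [this] at hyfr
      obtain ⟨w, hw⟩ := hfrne x hxFc
      exact hdisj.ne_of_mem (hyfr hw) (hxfr hw) rfl

/-- A closed subset of `ℂ` is connected iff each component of the complement has
connected boundary. -/
theorem closed_connected_iff_boundaries_connected (F : Set ℂ) (hF : IsClosed F) :
    IsConnected F ↔
      ∀ z ∈ Fᶜ, IsConnected (frontier (connectedComponentIn Fᶜ z)) := by
  constructor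
  · intro hFc z hz
    have hUo : IsOpen (connectedComponentIn Fᶜ z) := hF.isOpen_compl.connectedComponentIn
    refine ⟨frontier_comp_nonempty hF hFc.nonempty hz, ?_⟩
    have heq : frontier (connectedComponentIn Fᶜ z) =
        closure (connectedComponentIn Fᶜ z) ∩ (connectedComponentIn Fᶜ z)ᶜ := by
      rw [hUo.frontier_eq, Set.diff_eq]
    rw [heq]
    apply unicoherence isClosed_closure hUo.isClosed_compl
      isPreconnected_connectedComponentIn.closure
      (compl_comp_preconnected hF hFc.isPreconnected hFc.nonempty z)
    apply Set.eq_univ_of_univ_subset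
    intro w _
    by_cases hw : w ∈ connectedComponentIn Fᶜ z
    · exact Or.inl (subset_closure hw)
    · exact Or.inr hw
  · intro h
    by_cases huniv : F = Set.univ
    · rw [huniv]; exact ⟨⟨0, trivial⟩, isPreconnected_univ⟩
    obtain ⟨z₀, hz₀⟩ : Fᶜ.Nonempty := Set.nonempty_compl.mpr huniv
    have hFne : F.Nonempty := by
      obtain ⟨y, hy⟩ := (h z₀ hz₀).nonempty
      exact ⟨y, frontier_comp_subset hF z₀ hy⟩
    refine ⟨hFne, ?_⟩
    rw [isPreconnected_iff_subset_of_fully_disjoint_closed hF]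
    intro A' B' hA' hB' hcover hdisj'
    by_contra hcon
    push_neg at hcon
    set A := F ∩ A' with hA
    set B := F ∩ B' with hB
    have hAc : IsClosed A := hF.inter hA'
    have hBc : IsClosed B := hF.inter hB'
    have hUn : A ∪ B = F := by
      rw [hA, hB, ← Set.inter_union_distrib_left]
      exact Set.inter_eq_self_of_subset_left hcover
    have hdisj : Disjoint A B :=
      Set.disjoint_of_subset Set.inter_subset_right Set.inter_subset_right hdisj'
    have hAne : A.Nonempty := by
      obtain ⟨w, hw, hw'⟩ := Set.not_subset.mp hcon.2
      exact ⟨w, hw, (hcover hw).resolve_right hw'⟩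
    have hBne : B.Nonempty := by
      obtain ⟨w, hw, hw'⟩ := Set.not_subset.mp hcon.1
      exact ⟨w, hw, (hcover hw).resolve_left hw'⟩
    have hfrne : ∀ z ∈ Fᶜ, (frontier (connectedComponentIn Fᶜ z)).Nonempty :=
      fun z hz => (h z hz).nonempty
    have hfr : ∀ z ∈ Fᶜ, frontier (connectedComponentIn Fᶜ z) ⊆ A ∨
        frontier (connectedComponentIn Fᶜ z) ⊆ B := by
      intro z hz
      have h1 := (h z hz).isPreconnected
      have hsubF : frontier (connectedComponentIn Fᶜ z) ⊆ F := frontier_comp_subset hF z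
      rw [isPreconnected_iff_subset_of_fully_disjoint_closed isClosed_frontier] at h1
      rcases h1 A' B' hA' hB' (fun w hw => hcover (hsubF hw)) hdisj' with h2 | h2
      · exact Or.inl fun w hw => ⟨hsubF hw, h2 hw⟩
      · exact Or.inr fun w hw => ⟨hsubF hw, h2 hw⟩
    set X := A ∪ {z | z ∈ Fᶜ ∧ frontier (connectedComponentIn Fᶜ z) ⊆ A} with hXdef
    set Y := B ∪ {z | z ∈ Fᶜ ∧ frontier (connectedComponentIn Fᶜ z) ⊆ B} with hYdef
    have hXc : IsClosed X := X_isClosed hF hAc hBc hUn hdisj hfr hfrne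
    have hYc : IsClosed Y := X_isClosed hF hBc hAc (by rw [Set.union_comm]; exact hUn)
      hdisj.symm (fun z hz => (hfr z hz).symm) hfrne
    have hXYdisj : Disjoint X Y := by
      rw [Set.disjoint_left]
      rintro a (haA | ⟨haFc, hafr⟩) haY
      · rcases haY with haB | ⟨haFc, _⟩
        · exact hdisj.ne_of_mem haA haB rfl
        · exact haFc (hUn ▸ Or.inl haA)
      · rcases haY with haB | ⟨_, hafr'⟩
        · exact haFc (hUn ▸ Or.inr haB)
        · obtain ⟨w, hw⟩ := hfrne a haFc
          exact hdisj.ne_of_mem (hafr hw) (hafr' hw) rfl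
    have hXYunion : X ∪ Y = Set.univ := by
      apply Set.eq_univ_of_univ_subset
      intro w _
      by_cases hwF : w ∈ F
      · rcases (hUn ▸ hwF : w ∈ A ∪ B) with hw | hw
        · exact Or.inl (Or.inl hw)
        · exact Or.inr (Or.inl hw)
      · rcases hfr w hwF with hw | hw
        · exact Or.inl (Or.inr ⟨hwF, hw⟩)
        · exact Or.inr (Or.inr ⟨hwF, hw⟩)
    have hYX : Y = Xᶜ := by
      ext a
      constructor
      · exact fun haY haX => hXYdisj.ne_of_mem haX haY rfl
      · intro haX
        rcases (hXYunion ▸ Set.mem_univ a : a ∈ X ∪ Y) with h' | h'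
        · exact absurd h' haX
        · exact h'
    have hXclopen : IsClopen X := ⟨hXc, by rw [← isClosed_compl_iff, ← hYX]; exact hYc⟩
    rcases isClopen_iff.mp hXclopen with hempty | hallX
    · obtain ⟨a, ha⟩ := hAne
      exact (hempty ▸ (Or.inl ha : a ∈ X) : a ∈ (∅ : Set ℂ))
    · obtain ⟨b, hb⟩ := hBne
      have hbX : b ∈ X := hallX ▸ Set.mem_univ b
      exact hXYdisj.ne_of_mem hbX (Or.inl hb) rfl
end

section
/- Let G be a transcendental semigroup. If some g₀ ∈ G has the property that every component of F(g₀) is bounded, then the Fatou exceptional value set FV(G) is contained in J(G); i.e., no Fatou exceptional value of G lies in F(G). -/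
open Complex Filter Topology Set Bornology OnePoint

/-- An entire function of (real) polynomial growth is a polynomial. -/
lemma FatouAux.poly_of_growth : ∀ (d : ℕ) (f : ℂ → ℂ), Differentiable ℂ f →
    ∀ A B : ℝ, 0 ≤ B → (∀ z, ‖f z‖ ≤ A + B * ‖z‖ ^ d) →
    ∃ p : Polynomial ℂ, ∀ z, f z = p.eval z := by
  intro d
  induction d with
  | zero =>
    intro f hf A B hB hbound
    have hb : IsBounded (Set.range f) := by
      rw [isBounded_iff_forall_norm_le]
      refine ⟨A + B, ?_⟩
      rintro x ⟨z, rfl⟩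
      simpa using hbound z
    obtain ⟨c, hc⟩ := hf.exists_const_forall_eq_of_bounded hb
    exact ⟨Polynomial.C c, fun z => by simp [hc z]⟩
  | succ d ih =>
    intro f hf A B hB hbound
    have hψ : Differentiable ℂ (dslope f 0) := by
      rw [← differentiableOn_univ]
      exact (Complex.differentiableOn_dslope (c := 0) (s := (univ : Set ℂ)) univ_mem).mpr
        hf.differentiableOn
    obtain ⟨M, hM⟩ := (isCompact_closedBall (0:ℂ) 1).exists_bound_of_continuousOn
      hψ.continuous.continuousOn
    have hMnn : 0 ≤ M := le_trans (norm_nonneg _) (hM 0 (Metric.mem_closedBall_self zero_le_one))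
    set A' : ℝ := max M (|A| + ‖f 0‖) with hA'
    have hψbound : ∀ z, ‖dslope f 0 z‖ ≤ A' + B * ‖z‖ ^ d := by
      intro z
      have hzn : (0:ℝ) ≤ ‖z‖ := norm_nonneg z
      have hpd : (0:ℝ) ≤ ‖z‖ ^ d := pow_nonneg hzn d
      rcases le_or_gt ‖z‖ 1 with hz | hz
      · have h1 : ‖dslope f 0 z‖ ≤ M := hM z (by simpa [Metric.mem_closedBall, dist_eq_norm] using hz)
        have h2 : M ≤ A' := le_max_left _ _
        nlinarith [mul_nonneg hB hpd]
      · have hz0 : z ≠ 0 := by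
          intro h; rw [h, norm_zero] at hz; linarith
        have hzpos : (0:ℝ) < ‖z‖ := lt_trans one_pos hz
        have hsl : dslope f 0 z = z⁻¹ * (f z - f 0) := by
          rw [dslope_of_ne f hz0, slope_def_field]
          field_simp
          ring
        have hnorm : ‖dslope f 0 z‖ * ‖z‖ = ‖f z - f 0‖ := by
          rw [hsl, norm_mul, norm_inv, mul_comm ‖z‖⁻¹, mul_assoc,
            inv_mul_cancel₀ (norm_ne_zero_iff.mpr hz0), mul_one]
        have h3 : ‖f z - f 0‖ ≤ A + B * ‖z‖ ^ (d+1) + ‖f 0‖ :=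
          le_trans (norm_sub_le _ _) (by have := hbound z; linarith)
        have h4 : |A| + ‖f 0‖ ≤ A' := le_max_right _ _
        have h6 : ‖dslope f 0 z‖ * ‖z‖ ≤ (A' + B * ‖z‖ ^ d) * ‖z‖ := by
          rw [hnorm]
          have hA'0 : 0 ≤ A' := le_trans hMnn (le_max_left _ _)
          have h5 : ‖z‖ ^ (d + 1) = ‖z‖ ^ d * ‖z‖ := by ring
          have hAbs : A ≤ |A| := le_abs_self A
          have : A + ‖f 0‖ ≤ A' * ‖z‖ := by nlinarith
          nlinarith
        exact le_of_mul_le_mul_right h6 hzpos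
    obtain ⟨q, hq⟩ := ih (dslope f 0) hψ A' B hB hψbound
    refine ⟨Polynomial.C (f 0) + Polynomial.X * q, fun z => ?_⟩
    have h7 : (z - 0) • dslope f 0 z = f z - f 0 := sub_smul_dslope f 0 z
    simp only [sub_zero, smul_eq_mul] at h7
    simp only [Polynomial.eval_add, Polynomial.eval_mul, Polynomial.eval_C, Polynomial.eval_X]
    rw [← hq z]
    linear_combination -h7

/-- If an entire function stays away from the value `w` outside a compact set,
then it is a polynomial. -/
lemma FatouAux.poly_of_far_lower_bound (f : ℂ → ℂ) (hf : Differentiable ℂ f) (w : ℂ) {r R : ℝ}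
    (hr : 0 < r) (hR : 0 < R) (hlow : ∀ z : ℂ, R ≤ ‖z‖ → r ≤ ‖f z - w‖) :
    ∃ p : Polynomial ℂ, ∀ z, f z = p.eval z := by
  have hRinv : (0:ℝ) < R⁻¹ := inv_pos.mpr hR
  set s : Set ℂ := Metric.ball 0 R⁻¹ with hs
  set F : ℂ → ℂ := fun ζ => (f ζ⁻¹ - w)⁻¹ with hF
  have hkey : ∀ ζ : ℂ, ζ ∈ s \ {0} → R ≤ ‖ζ⁻¹‖ ∧ f ζ⁻¹ - w ≠ 0 := by
    rintro ζ ⟨hζs, hζ0⟩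
    have hζ0' : ζ ≠ 0 := hζ0
    have hζpos : (0:ℝ) < ‖ζ‖ := norm_pos_iff.mpr hζ0'
    have hζlt : ‖ζ‖ < R⁻¹ := by simpa [hs, Metric.mem_ball, dist_eq_norm] using hζs
    have h1 : R ≤ ‖ζ‖⁻¹ := by
      rw [← inv_inv R]
      exact le_of_lt (by gcongr)
    rw [norm_inv]
    refine ⟨h1, ?_⟩
    have := hlow ζ⁻¹ (by rwa [norm_inv])
    intro h; rw [h, norm_zero] at this; linarith
  have hFd : DifferentiableOn ℂ F (s \ {0}) := by
    rintro ζ hζ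
    obtain ⟨h1, h2⟩ := hkey ζ hζ
    have hζ0 : ζ ≠ 0 := hζ.2
    have hd1 : DifferentiableAt ℂ (fun ζ : ℂ => f ζ⁻¹ - w) ζ :=
      ((hf.differentiableAt).comp ζ (differentiableAt_inv hζ0)).sub_const w
    exact (hd1.inv h2).differentiableWithinAt
  have hFb : BddAbove (norm ∘ F '' (s \ {0})) := by
    refine ⟨r⁻¹, ?_⟩
    rintro y ⟨ζ, hζ, rfl⟩
    obtain ⟨h1, h2⟩ := hkey ζ hζ
    simp only [Function.comp_apply, hF, norm_inv]
    exact inv_anti₀ hr (hlow ζ⁻¹ h1)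
  set G : ℂ → ℂ := Function.update F 0 (limUnder (𝓝[≠] (0:ℂ)) F) with hG
  have hGd : DifferentiableOn ℂ G s :=
    Complex.differentiableOn_update_limUnder_of_bddAbove (Metric.ball_mem_nhds 0 hRinv) hFd hFb
  have hGan : AnalyticAt ℂ G 0 :=
    hGd.analyticAt (Metric.ball_mem_nhds 0 hRinv)
  have hGF : ∀ ζ : ℂ, ζ ≠ 0 → G ζ = F ζ := fun ζ h => Function.update_of_ne h _ _
  have ho : analyticOrderAt G 0 ≠ ⊤ := by
    intro htop
    have hev := analyticOrderAt_eq_top.mp htop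
    obtain ⟨δ, hδpos, hδ⟩ := Metric.eventually_nhds_iff.mp hev
    set ζ : ℂ := ((min δ R⁻¹ / 2 : ℝ) : ℂ) with hζdef
    have hmin : (0:ℝ) < min δ R⁻¹ := lt_min hδpos hRinv
    have hζn : ‖ζ‖ = min δ R⁻¹ / 2 := by
      rw [hζdef, Complex.norm_real, Real.norm_of_nonneg (by linarith)]
    have hζ0 : ζ ≠ 0 := by
      intro h; rw [h, norm_zero] at hζn; linarith
    have hζδ : dist ζ 0 < δ := by
      rw [dist_zero_right, hζn]
      have : min δ R⁻¹ ≤ δ := min_le_left _ _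
      linarith
    have hζs : ζ ∈ s \ {0} := by
      constructor
      · rw [hs, Metric.mem_ball, dist_zero_right, hζn]
        have : min δ R⁻¹ ≤ R⁻¹ := min_le_right _ _
        linarith
      · exact hζ0
    have := hδ hζδ
    rw [hGF ζ hζ0] at this
    obtain ⟨-, h2⟩ := hkey ζ hζs
    exact h2 (by simpa [hF, inv_eq_zero] using this)
  obtain ⟨m, hm⟩ := WithTop.ne_top_iff_exists.mp ho
  obtain ⟨g, hg_an, hg0, hev⟩ := (hGan.analyticOrderAt_eq_natCast (n := m)).mp hm.symm
  set c : ℝ := ‖g 0‖ / 2 with hc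
  have hcpos : 0 < c := by
    have := norm_pos_iff.mpr hg0
    rw [hc]; linarith
  have hgpos : ∀ᶠ ζ in 𝓝 (0:ℂ), c ≤ ‖g ζ‖ := by
    have hgc := hg_an.continuousAt
    have h2 : ∀ᶠ ζ in 𝓝 (0:ℂ), ‖g ζ - g 0‖ < c :=
      hgc.tendsto.eventually (by
        have : Metric.ball (g 0) c ∈ 𝓝 (g 0) := Metric.ball_mem_nhds _ hcpos
        filter_upwards [this] with y hy
        rwa [Metric.mem_ball, dist_eq_norm] at hy)
    filter_upwards [h2] with ζ h2
    have h3 := norm_sub_norm_le (g 0) (g ζ)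
    have h4 : ‖g 0 - g ζ‖ = ‖g ζ - g 0‖ := norm_sub_rev _ _
    rw [hc]
    have h5 : ‖g 0‖ - ‖g ζ‖ ≤ ‖g ζ - g 0‖ := by rw [← h4]; exact h3
    linarith
  obtain ⟨δ, hδpos, hδ⟩ := Metric.eventually_nhds_iff.mp (hev.and hgpos)
  set δ' : ℝ := min δ R⁻¹ with hδ'
  have hδ'pos : 0 < δ' := lt_min hδpos hRinv
  have hfar : ∀ z : ℂ, δ'⁻¹ < ‖z‖ → ‖f z‖ ≤ ‖w‖ + c⁻¹ * ‖z‖ ^ m := by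
    intro z hz
    have hδ'inv : 0 < δ'⁻¹ := inv_pos.mpr hδ'pos
    have hzpos : (0:ℝ) < ‖z‖ := lt_trans hδ'inv hz
    have hz0 : z ≠ 0 := norm_pos_iff.mp hzpos
    set ζ : ℂ := z⁻¹ with hζdef
    have hζ0 : ζ ≠ 0 := inv_ne_zero hz0
    have hζn : ‖ζ‖ = ‖z‖⁻¹ := norm_inv z
    have hζδ' : ‖ζ‖ < δ' := by
      rw [hζn, ← inv_inv δ']
      gcongr
    have hζδ : dist ζ 0 < δ := by
      rw [dist_zero_right]
      exact lt_of_lt_of_le hζδ' (min_le_left _ _)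
    obtain ⟨h1, h2⟩ := hδ hζδ
    rw [hGF ζ hζ0] at h1
    have hζiz : ζ⁻¹ = z := inv_inv z
    have hRz : R ≤ ‖z‖ := by
      have hle : δ' ≤ R⁻¹ := min_le_right _ _
      have h3 : (R⁻¹)⁻¹ ≤ δ'⁻¹ := by gcongr
      rw [inv_inv] at h3
      linarith
    have hfzw : f z - w ≠ 0 := by
      have := hlow z hRz
      intro h; rw [h, norm_zero] at this; linarith
    have hFval : F ζ = (f z - w)⁻¹ := by rw [hF]; simp only [hζiz]
    rw [hFval] at h1
    have h4 : ‖(f z - w)⁻¹‖ = ‖ζ‖ ^ m * ‖g ζ‖ := by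
      rw [h1, sub_zero, norm_smul, norm_pow]
    rw [norm_inv] at h4
    have h5 : ‖ζ‖ ^ m * ‖g ζ‖ ≥ ‖z‖⁻¹ ^ m * c := by
      rw [hζn]
      gcongr
    have h6 : (0:ℝ) < ‖z‖⁻¹ ^ m * c := by positivity
    have h7 : ‖f z - w‖⁻¹ ≥ ‖z‖⁻¹ ^ m * c := by rw [h4]; exact h5
    have h8 : ‖f z - w‖ ≤ (‖z‖⁻¹ ^ m * c)⁻¹ := by
      have h9 : 0 < ‖f z - w‖ := norm_pos_iff.mpr hfzw
      rw [ge_iff_le, le_inv_comm₀ h6 h9] at h7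
      exact h7
    have h10 : (‖z‖⁻¹ ^ m * c)⁻¹ = c⁻¹ * ‖z‖ ^ m := by
      rw [mul_inv, inv_pow, inv_inv]
      ring
    have h12 : ‖f z‖ ≤ ‖w‖ + ‖f z - w‖ := by
      have h11 := norm_add_le (f z - w) w
      have he : f z - w + w = f z := by ring
      rw [he] at h11
      linarith
    rw [h10] at h8
    linarith
  obtain ⟨M, hM⟩ := (isCompact_closedBall (0:ℂ) δ'⁻¹).exists_bound_of_continuousOn
    hf.continuous.continuousOn
  refine FatouAux.poly_of_growth m f hf (max M ‖w‖) c⁻¹ (le_of_lt (inv_pos.mpr hcpos)) ?_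
  intro z
  have hpd : (0:ℝ) ≤ ‖z‖ ^ m := pow_nonneg (norm_nonneg z) m
  rcases le_or_gt ‖z‖ δ'⁻¹ with hz | hz
  · have h1 : ‖f z‖ ≤ M := hM z (by simpa [Metric.mem_closedBall, dist_eq_norm] using hz)
    have h2 : M ≤ max M ‖w‖ := le_max_left _ _
    nlinarith [mul_nonneg (le_of_lt (inv_pos.mpr hcpos)) hpd]
  · have h1 := hfar z hz
    have h2 : ‖w‖ ≤ max M ‖w‖ := le_max_right _ _
    linarith

lemma FatouAux.isOpen_fatouSet (G : Set (ℂ → ℂ)) : IsOpen (FatouSet G) := by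
  rw [isOpen_iff_mem_nhds]
  rintro z ⟨U, hUo, hzU, hN⟩
  exact Filter.mem_of_superset (hUo.mem_nhds hzU) (fun y hy => ⟨U, hUo, hy, hN⟩)

/-- Backward invariance of the Fatou set of a single function. -/
lemma FatouAux.fatouFn_backInv (f : ℂ → ℂ) (hf : Continuous f) {x : ℂ} (hx : f x ∈ FatouFn f) :
    x ∈ FatouFn f := by
  obtain ⟨U, hUo, hmem, hN⟩ := hx
  refine ⟨f ⁻¹' U, hUo.preimage hf, hmem, ?_⟩
  intro s hs
  choose k hk hks using hs
  by_cases hinf : {n | k n = 1}.Infinite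
  · refine ⟨Nat.nth (fun n => k n = 1), Nat.nth_strictMono hinf, Or.inl ⟨f, ?_⟩⟩
    intro u hu x' hx'
    refine ⟨f ⁻¹' U, self_mem_nhdsWithin, Filter.Eventually.of_forall fun n y hy => ?_⟩
    have hval : s (Nat.nth (fun n => k n = 1) n) = f := by
      rw [hks, Nat.nth_mem_of_infinite hinf n, Function.iterate_one]
    show (f y, s (Nat.nth (fun n => k n = 1) n) y) ∈ u
    rw [hval]
    exact refl_mem_uniformity hu
  · rw [Set.not_infinite] at hinf
    obtain ⟨N, hNbig⟩ : ∃ N, ∀ n, N ≤ n → k n ≠ 1 := by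
      rcases hinf.bddAbove with ⟨N0, hN0⟩
      refine ⟨N0 + 1, fun n hn hkn => ?_⟩
      have := hN0 hkn
      omega
    set t : ℕ → (ℂ → ℂ) := fun n => f^[k (n + N) - 1] with ht
    have htmem : ∀ n, t n ∈ {h | ∃ m, 0 < m ∧ h = f^[m]} := by
      intro n
      refine ⟨k (n + N) - 1, ?_, rfl⟩
      have h1 := hk (n + N)
      have h2 := hNbig (n + N) (by omega)
      omega
    obtain ⟨ψ, hψ, hcase⟩ := hN t htmem
    refine ⟨fun n => ψ n + N, fun a b hab => by simpa using Nat.add_lt_add_right (hψ hab) N, ?_⟩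
    have hiter : ∀ n (z : ℂ), s (ψ n + N) z = t (ψ n) (f z) := by
      intro n z
      rw [hks]
      have h2 : k (ψ n + N) = (k (ψ n + N) - 1) + 1 := by
        have h1 := hk (ψ n + N); omega
      rw [ht]
      simp only []
      rw [h2]
      exact Function.iterate_succ_apply f _ z
    rcases hcase with ⟨h, hTLU⟩ | hdiv
    · left
      refine ⟨h ∘ f, ?_⟩
      have hcomp := hTLU.comp f (fun z hz => hz) hf.continuousOn
      have heq : (fun n => s (ψ n + N)) = (fun n => t (ψ n) ∘ f) :=
        funext fun n => funext fun z => hiter n z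
      rw [heq]
      exact hcomp
    · right
      intro K hK hKc M
      have h1 := hdiv (f '' K) (image_subset_iff.mpr hK) (hKc.image hf) M
      refine h1.mono fun n hn z hz => ?_
      rw [hiter n z]
      exact hn (f z) (mem_image_of_mem f hz)

/-- If some `g₀ ∈ G` has all Fatou components bounded, then the Fatou exceptional values
of `G` lie in the Julia set `J(G)`. -/
theorem fatouExceptional_subset_julia (G : Set (ℂ → ℂ))
    (hGtrans : ∀ f ∈ G, TranscendentalEntire f)
    (hGcomp : ∀ f ∈ G, ∀ g ∈ G, f ∘ g ∈ G)
    (g₀ : ℂ → ℂ) (hg₀ : g₀ ∈ G)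
    (hbd : ∀ z ∈ FatouFn g₀, IsBounded (connectedComponentIn (FatouFn g₀) z)) :
    {w : ℂ | {z : ℂ | ∃ g ∈ G, g z = w}.Finite} ⊆ (FatouSet G)ᶜ := by
  intro w hw
  simp only [mem_compl_iff]
  intro hwF
  obtain ⟨hfd, hfnp⟩ := hGtrans g₀ hg₀
  have hwfin : {z : ℂ | ∃ g ∈ G, g z = w}.Finite := hw
  have hiterG : ∀ n, 0 < n → g₀^[n] ∈ G := by
    intro n hn
    induction n with
    | zero => omega
    | succ m ih =>
      rcases Nat.eq_zero_or_pos m with rfl | hm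
      · simpa using hg₀
      · have h2 := hGcomp (g₀^[m]) (ih hm) g₀ hg₀
        rwa [← Function.iterate_succ] at h2
  have hwFf : w ∈ FatouFn g₀ := by
    obtain ⟨U₀, hU₀o, hwU₀, hN⟩ := hwF
    refine ⟨U₀, hU₀o, hwU₀, ?_⟩
    intro s hs
    refine hN s (fun n => ?_)
    obtain ⟨m, hm, hsm⟩ := hs n
    rw [hsm]; exact hiterG m hm
  have hFo : IsOpen (FatouFn g₀) := FatouAux.isOpen_fatouSet _
  have hcont : Continuous g₀ := hfd.continuous
  set U : Set ℂ := connectedComponentIn (FatouFn g₀) w with hUdef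
  have hwU : w ∈ U := mem_connectedComponentIn hwFf
  have hUo : IsOpen U := hFo.connectedComponentIn
  have hUpre : IsPreconnected U := isPreconnected_connectedComponentIn
  obtain ⟨r', hr'pos, hball⟩ := Metric.isOpen_iff.mp hUo w hwU
  set P : Set ℂ := g₀ ⁻¹' U with hPdef
  have hPo : IsOpen P := hUo.preimage hcont
  have hPF : P ⊆ FatouFn g₀ := fun y hy =>
    FatouAux.fatouFn_backInv g₀ hcont (connectedComponentIn_subset (FatouFn g₀) w hy)
  have hPcompbd : ∀ x ∈ P, IsBounded (connectedComponentIn P x) := by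
    intro x hx
    have h1 : connectedComponentIn P x ⊆ connectedComponentIn (FatouFn g₀) x :=
      isPreconnected_connectedComponentIn.subset_connectedComponentIn
        (mem_connectedComponentIn hx) ((connectedComponentIn_subset P x).trans hPF)
    exact (hbd x (hPF hx)).subset h1
  have han : AnalyticOnNhd ℂ g₀ univ := hfd.differentiableOn.analyticOnNhd isOpen_univ
  have hopenmap : ∀ s : Set ℂ, IsOpen s → IsOpen (g₀ '' s) := by
    rcases han.is_constant_or_isOpen isPreconnected_univ with ⟨v, hv⟩ | hopen
    · exact absurd ⟨Polynomial.C v, funext fun z => by simpa using hv z (mem_univ z)⟩ hfnp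
    · exact fun s hs => hopen s (subset_univ s) hs
  have hcomp : ∀ x ∈ P, ∃ b ∈ {z : ℂ | ∃ g ∈ G, g z = w},
      connectedComponentIn P x = connectedComponentIn P b := by
    intro x hx
    have hxW : x ∈ connectedComponentIn P x := mem_connectedComponentIn hx
    have hWP : connectedComponentIn P x ⊆ P := connectedComponentIn_subset P x
    have hWo : IsOpen (connectedComponentIn P x) := hPo.connectedComponentIn
    have hWbd : IsBounded (connectedComponentIn P x) := hPcompbd x hx
    have himg_open : IsOpen (g₀ '' connectedComponentIn P x) := hopenmap _ hWo
    have hcl : closure (g₀ '' connectedComponentIn P x) ⊆ g₀ '' closure (connectedComponentIn P x) :=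
      closure_minimal (image_mono subset_closure)
        (hWbd.isCompact_closure.image hcont).isClosed
    have hkey : U ∩ closure (g₀ '' connectedComponentIn P x) ⊆ g₀ '' connectedComponentIn P x := by
      rintro y ⟨hyU, hycl⟩
      obtain ⟨x', hx'cl, rfl⟩ := hcl hycl
      have hx'P : x' ∈ P := hyU
      by_cases hmem : x' ∈ connectedComponentIn P x
      · exact mem_image_of_mem g₀ hmem
      · exfalso
        have hW'o : IsOpen (connectedComponentIn P x') := hPo.connectedComponentIn
        have hx'W' : x' ∈ connectedComponentIn P x' := mem_connectedComponentIn hx'P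
        obtain ⟨t', ht'W', ht'W⟩ : (connectedComponentIn P x' ∩ connectedComponentIn P x).Nonempty := by
          rw [mem_closure_iff] at hx'cl
          exact hx'cl _ hW'o hx'W'
        have h1 := connectedComponentIn_eq ht'W'
        have h2 := connectedComponentIn_eq ht'W
        exact hmem (by rw [h2, ← h1]; exact hx'W')
    have hcover : U ⊆ g₀ '' connectedComponentIn P x ∪ (closure (g₀ '' connectedComponentIn P x))ᶜ := by
      intro y hy
      by_cases hc : y ∈ closure (g₀ '' connectedComponentIn P x)
      · exact Or.inl (hkey ⟨hy, hc⟩)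
      · exact Or.inr hc
    have hne1 : (U ∩ g₀ '' connectedComponentIn P x).Nonempty :=
      ⟨g₀ x, hx, mem_image_of_mem g₀ hxW⟩
    have hUsub : U ⊆ g₀ '' connectedComponentIn P x := by
      by_contra hcon
      obtain ⟨y, hyU, hyn⟩ := not_subset.mp hcon
      have hne2 : (U ∩ (closure (g₀ '' connectedComponentIn P x))ᶜ).Nonempty :=
        ⟨y, hyU, fun hc => hyn (hkey ⟨hyU, hc⟩)⟩
      obtain ⟨z, _, hz1, hz2⟩ := hUpre _ _ himg_open isClosed_closure.isOpen_compl hcover hne1 hne2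
      exact hz2 (subset_closure hz1)
    obtain ⟨b, hbW, hbw⟩ := hUsub hwU
    exact ⟨b, ⟨g₀, hg₀, hbw⟩, connectedComponentIn_eq hbW⟩
  have hPbd : IsBounded P := by
    have hsub : P ⊆ ⋃ b ∈ {z : ℂ | ∃ g ∈ G, g z = w}, connectedComponentIn P b := by
      intro x hx
      obtain ⟨b, hbB, heq⟩ := hcomp x hx
      refine mem_biUnion hbB ?_
      rw [← heq]
      exact mem_connectedComponentIn hx
    refine ((isBounded_biUnion hwfin).mpr ?_).subset hsub
    intro b hb
    by_cases hbP : b ∈ P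
    · exact hPcompbd b hbP
    · rw [connectedComponentIn_eq_empty hbP]; exact isBounded_empty
  obtain ⟨R0, hR0⟩ := hPbd.subset_closedBall 0
  have hRpos : (0:ℝ) < max R0 0 + 1 := by positivity
  have hlow : ∀ z : ℂ, max R0 0 + 1 ≤ ‖z‖ → r' ≤ ‖g₀ z - w‖ := by
    intro z hz
    have hzP : z ∉ P := by
      intro hzP
      have h1 := hR0 hzP
      rw [Metric.mem_closedBall, dist_zero_right] at h1
      have h2 : R0 ≤ max R0 0 := le_max_left _ _
      linarith
    by_contra hcon
    push_neg at hcon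
    exact hzP (hball (by rwa [Metric.mem_ball, dist_eq_norm]))
  obtain ⟨p, hp⟩ := FatouAux.poly_of_far_lower_bound g₀ hfd w hr'pos hRpos hlow
  exact hfnp ⟨p, funext hp⟩
end
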